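/- Let X = (X_1,…,X_d) be a random vector on a probability space. Then X is positive upper orthant dependent if and only if for every choice of bounded measurable nondecreasing functions f_i : ℝ → [0,∞), i = 1,…,d, one has E(∏_{i=1}^d f_i(X_i)) ≥ ∏_{i=1}^d E f_i(X_i). -/

import Mathlib

open MeasureTheory Filter Topology

private lemma upper_cases' {s : Set ℝ} (hs : IsUpperSet s) :
    s = ∅ ∨ s = Set.univ ∨ (∃ a, s = Set.Ioi a) ∨ ∃ a, s = Set.Ici a := by
  by_cases h1 : s = ∅
  · exact Or.inl h1
  by_cases h2 : s = Set.univ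
  · exact Or.inr (Or.inl h2)
  right; right
  have hne : s.Nonempty := Set.nonempty_iff_ne_empty.2 h1
  obtain ⟨y, hy⟩ : ∃ y, y ∉ s := by
    by_contra h; push_neg at h; exact h2 (Set.eq_univ_of_forall h)
  have hbdd : BddBelow s := ⟨y, fun x hx => by
    by_contra h
    push_neg at h
    exact hy (hs h.le hx)⟩
  have hIoi : Set.Ioi (sInf s) ⊆ s := fun x hx => by
    obtain ⟨z, hz, hzx⟩ := exists_lt_of_csInf_lt hne hx
    exact hs hzx.le hz
  have hIci : s ⊆ Set.Ici (sInf s) := fun x hx => csInf_le hbdd hx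
  by_cases hmem : sInf s ∈ s
  · refine Or.inr ⟨sInf s, Set.Subset.antisymm hIci fun x hx => ?_⟩
    rcases eq_or_lt_of_le (Set.mem_Ici.1 hx : sInf s ≤ x) with h | h
    · exact h ▸ hmem
    · exact hIoi h
  · refine Or.inl ⟨sInf s, Set.Subset.antisymm (fun x hx => ?_) hIoi⟩
    exact lt_of_le_of_ne (Set.mem_Ici.1 (hIci hx)) fun h => hmem (h.symm ▸ hx)

private lemma upper_seq' {s : Set ℝ} (hs : IsUpperSet s) (hne : s ≠ ∅) :
    MeasurableSet s ∧ ∃ u : ℕ → ℝ, ∀ x : ℝ, ∀ᶠ n in atTop, (u n < x ↔ x ∈ s) := by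
  rcases upper_cases' hs with h | h | ⟨a, h⟩ | ⟨a, h⟩
  · exact absurd h hne
  · subst h
    refine ⟨MeasurableSet.univ, fun n => -((n : ℝ) + 1), fun x => ?_⟩
    filter_upwards [eventually_ge_atTop ⌈-x⌉₊] with n hn
    have hc1 : -x ≤ (⌈-x⌉₊ : ℝ) := Nat.le_ceil _
    have hc2 : (⌈-x⌉₊ : ℝ) ≤ (n : ℝ) := by exact_mod_cast hn
    simp only [Set.mem_univ, iff_true]
    linarith
  · subst h
    exact ⟨measurableSet_Ioi, fun _ => a, fun x => Eventually.of_forall fun n => Iff.rfl⟩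
  · subst h
    refine ⟨measurableSet_Ici, fun n => a - 1 / ((n : ℝ) + 1), fun x => ?_⟩
    rcases le_or_gt a x with hax | hax
    · refine Eventually.of_forall fun n => ?_
      have hp : (0 : ℝ) < 1 / ((n : ℝ) + 1) := by positivity
      simp only [Set.mem_Ici, hax, iff_true]
      linarith
    · filter_upwards [eventually_ge_atTop ⌈1 / (a - x)⌉₊] with n hn
      have hax' : 0 < a - x := by linarith
      have hc1 : 1 / (a - x) ≤ (⌈1 / (a - x)⌉₊ : ℝ) := Nat.le_ceil _
      have hc2 : (⌈1 / (a - x)⌉₊ : ℝ) ≤ (n : ℝ) := by exact_mod_cast hn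
      have h3 : 1 / (a - x) ≤ (n : ℝ) + 1 := by linarith
      have h4 : 1 / ((n : ℝ) + 1) ≤ a - x := by
        rw [div_le_iff₀ (by positivity)]
        rw [div_le_iff₀ hax'] at h3
        nlinarith
      simp only [Set.mem_Ici]
      constructor
      · intro hlt; linarith
      · intro hge; linarith

private lemma tendsto_measure_of_eventually_iff' {Ω : Type*} [MeasurableSpace Ω]
    (P : Measure Ω) [IsProbabilityMeasure P] {p : ℕ → Ω → Prop} {q : Ω → Prop}
    (hp : ∀ n, MeasurableSet {ω | p n ω}) (hq : MeasurableSet {ω | q ω})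
    (hpq : ∀ ω, ∀ᶠ n in atTop, (p n ω ↔ q ω)) :
    Tendsto (fun n => P {ω | p n ω}) atTop (𝓝 (P {ω | q ω})) := by
  classical
  have key : ∀ (p' : Ω → Prop), MeasurableSet {ω | p' ω} →
      ∫⁻ ω, (if p' ω then (1 : ENNReal) else 0) ∂P = P {ω | p' ω} := by
    intro p' hp'
    rw [← lintegral_indicator_one hp']
    refine lintegral_congr fun ω => ?_
    by_cases hc : p' ω <;> simp [Set.indicator_apply, Set.mem_setOf_eq, hc]
  have h1 : ∀ n, ∫⁻ ω, (if p n ω then (1 : ENNReal) else 0) ∂P = P {ω | p n ω} :=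
    fun n => key _ (hp n)
  have h2 : ∫⁻ ω, (if q ω then (1 : ENNReal) else 0) ∂P = P {ω | q ω} := key _ hq
  rw [← h2]
  have h1' : (fun n => P {ω | p n ω})
      = fun n => ∫⁻ ω, (if p n ω then (1 : ENNReal) else 0) ∂P := by
    ext n; rw [h1]
  rw [h1']
  refine tendsto_lintegral_of_dominated_convergence (fun _ => 1) (fun n => ?_) ?_ ?_ ?_
  · exact Measurable.ite (hp n) measurable_const measurable_const
  · exact fun n => Eventually.of_forall fun ω => by dsimp only; split_ifs <;> simp
  · simp
  · refine Eventually.of_forall fun ω => ?_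
    refine Tendsto.congr' ?_ tendsto_const_nhds
    filter_upwards [hpq ω] with n hn
    simp only [hn]

private lemma puod_upper' {Ω : Type*} [MeasurableSpace Ω] (P : Measure Ω) [IsProbabilityMeasure P]
    {d : ℕ} (X : Fin d → Ω → ℝ) (hX : ∀ i, Measurable (X i))
    (hP : ∀ t : Fin d → ℝ, ∏ i, P {ω | t i < X i ω} ≤ P {ω | ∀ i, t i < X i ω})
    (s : Fin d → Set ℝ) (hs : ∀ i, IsUpperSet (s i)) :
    ∏ i, P {ω | X i ω ∈ s i} ≤ P {ω | ∀ i, X i ω ∈ s i} := by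
  by_cases hemp : ∃ i, s i = ∅
  · obtain ⟨i, hi⟩ := hemp
    have h0 : P {ω | X i ω ∈ s i} = 0 := by simp [hi]
    rw [Finset.prod_eq_zero (Finset.mem_univ i) h0]
    exact zero_le
  push_neg at hemp
  have hcls := fun i => upper_seq' (hs i) (Set.nonempty_iff_ne_empty.1 (hemp i))
  choose hmeas u hu using hcls
  have hSmeas : ∀ i, MeasurableSet {ω | X i ω ∈ s i} := fun i => (hX i) (hmeas i)
  have hSnmeas : ∀ (n : ℕ) (i : Fin d), MeasurableSet {ω | u i n < X i ω} := fun n i =>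
    (hX i) measurableSet_Ioi
  have hBmeas : ∀ n : ℕ, MeasurableSet {ω | ∀ i, u i n < X i ω} := fun n => by
    have he : {ω | ∀ i, u i n < X i ω} = ⋂ i, {ω | u i n < X i ω} := by ext ω; simp
    rw [he]; exact MeasurableSet.iInter fun i => hSnmeas n i
  have hAmeas : MeasurableSet {ω | ∀ i, X i ω ∈ s i} := by
    have he : {ω | ∀ i, X i ω ∈ s i} = ⋂ i, {ω | X i ω ∈ s i} := by ext ω; simp
    rw [he]; exact MeasurableSet.iInter hSmeas
  have hLHS : ∀ i, Tendsto (fun n => P {ω | u i n < X i ω}) atTop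
      (𝓝 (P {ω | X i ω ∈ s i})) :=
    fun i => tendsto_measure_of_eventually_iff' P (fun n => hSnmeas n i) (hSmeas i)
      fun ω => hu i (X i ω)
  have hRHS : Tendsto (fun n => P {ω | ∀ i, u i n < X i ω}) atTop
      (𝓝 (P {ω | ∀ i, X i ω ∈ s i})) := by
    refine tendsto_measure_of_eventually_iff' P hBmeas hAmeas fun ω => ?_
    have hall := fun i => hu i (X i ω)
    rw [← eventually_all] at hall
    filter_upwards [hall] with n hn
    exact forall_congr' hn
  have hLHS' : Tendsto (fun n => ∏ i, (P {ω | u i n < X i ω}).toReal) atTop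
      (𝓝 (∏ i, (P {ω | X i ω ∈ s i}).toReal)) :=
    tendsto_finset_prod _ fun i _ =>
      (ENNReal.tendsto_toReal (measure_ne_top P _)).comp (hLHS i)
  have hRHS' : Tendsto (fun n => (P {ω | ∀ i, u i n < X i ω}).toReal) atTop
      (𝓝 ((P {ω | ∀ i, X i ω ∈ s i}).toReal)) :=
    (ENNReal.tendsto_toReal (measure_ne_top P _)).comp hRHS
  have hle : ∀ n, ∏ i, (P {ω | u i n < X i ω}).toReal
      ≤ (P {ω | ∀ i, u i n < X i ω}).toReal := by
    intro n
    rw [← ENNReal.toReal_prod]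
    exact ENNReal.toReal_mono (measure_ne_top P _) (hP fun i => u i n)
  have hfinal := le_of_tendsto_of_tendsto' hLHS' hRHS' hle
  rw [← ENNReal.toReal_prod] at hfinal
  exact (ENNReal.toReal_le_toReal (ENNReal.prod_ne_top fun i _ => measure_ne_top P _)
    (measure_ne_top P _)).1 hfinal

private lemma step_bounds' (y h : ℝ) (hy : 0 ≤ y) (hh : 0 < h) (N : ℕ) (hN : y ≤ (N : ℝ) * h) :
    y - h ≤ (∑ k ∈ Finset.range N, h * (if ((k : ℝ) + 1) * h < y then (1 : ℝ) else 0)) ∧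
      (∑ k ∈ Finset.range N, h * (if ((k : ℝ) + 1) * h < y then (1 : ℝ) else 0)) ≤ y := by
  constructor
  · -- lower bound via telescoping with g' k = min y ((k+1) h)
    set g : ℕ → ℝ := fun k => min y (((k : ℝ) + 1) * h) with hg
    have htel : ∑ k ∈ Finset.range N, (g (k + 1) - g k) = g N - g 0 := Finset.sum_range_sub g N
    have hstep : ∀ k ∈ Finset.range N,
        g (k + 1) - g k ≤ h * (if ((k : ℝ) + 1) * h < y then (1 : ℝ) else 0) := by
      intro k _
      have hcast : (((k + 1 : ℕ)) : ℝ) = (k : ℝ) + 1 := by push_cast; ring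
      simp only [hg, hcast]
      split_ifs with hc
      · have h1 : min y (((k : ℝ) + 1 + 1) * h) ≤ ((k : ℝ) + 1 + 1) * h := min_le_right _ _
        have h2 : min y (((k : ℝ) + 1) * h) = ((k : ℝ) + 1) * h := min_eq_right hc.le
        rw [h2]; nlinarith
      · push_neg at hc
        have h2 : min y (((k : ℝ) + 1) * h) = y := min_eq_left hc
        have h1 : min y (((k : ℝ) + 1 + 1) * h) = y := min_eq_left (by nlinarith)
        rw [h1, h2]; norm_num
    have hsum := Finset.sum_le_sum hstep
    rw [htel] at hsum
    have hgN : g N = y := min_eq_left (by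
      have : (N : ℝ) * h ≤ ((N : ℝ) + 1) * h := by nlinarith
      linarith)
    have hg0 : g 0 = min y h := by simp [hg]
    have hmin : y - h ≤ g N - g 0 := by
      rw [hgN, hg0]
      have : min y h ≤ h := min_le_right _ _
      linarith
    linarith
  · set g : ℕ → ℝ := fun k => min y ((k : ℝ) * h) with hg
    have htel : ∑ k ∈ Finset.range N, (g (k + 1) - g k) = g N - g 0 := Finset.sum_range_sub g N
    have hstep : ∀ k ∈ Finset.range N,
        h * (if ((k : ℝ) + 1) * h < y then (1 : ℝ) else 0) ≤ g (k + 1) - g k := by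
      intro k _
      have hcast : (((k + 1 : ℕ)) : ℝ) = (k : ℝ) + 1 := by push_cast; ring
      simp only [hg, hcast]
      split_ifs with hc
      · have h1 : min y (((k : ℝ) + 1) * h) = ((k : ℝ) + 1) * h := min_eq_right hc.le
        have h2 : min y ((k : ℝ) * h) = (k : ℝ) * h := min_eq_right (by nlinarith)
        rw [h1, h2]; ring_nf; nlinarith
      · have hmono : min y ((k : ℝ) * h) ≤ min y (((k : ℝ) + 1) * h) :=
          min_le_min le_rfl (by nlinarith)
        linarith
    have hsum := Finset.sum_le_sum hstep
    rw [htel] at hsum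
    have hgN : g N = y := min_eq_left hN
    have hg0 : g 0 = 0 := by simp [hg, min_eq_right hy]
    rw [hgN, hg0] at hsum
    linarith

/-- `X` is positive upper orthant dependent if and only if for all bounded
measurable nondecreasing nonnegative `fᵢ : ℝ → ℝ`,
`E (∏ᵢ fᵢ(Xᵢ)) ≥ ∏ᵢ E fᵢ(Xᵢ)`. -/
theorem PUOD_iff_product_of_nondecreasing
    {Ω : Type*} [MeasurableSpace Ω] (P : Measure Ω) [IsProbabilityMeasure P]
    (d : ℕ) (X : Fin d → Ω → ℝ) (hX : ∀ i, Measurable (X i)) :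
    (∀ t : Fin d → ℝ, ∏ i, P {ω | t i < X i ω} ≤ P {ω | ∀ i, t i < X i ω}) ↔
      (∀ f : Fin d → ℝ → ℝ, (∀ i, Measurable (f i)) → (∀ i, Monotone (f i)) →
        (∀ i, ∃ C, ∀ x, |f i x| ≤ C) → (∀ i x, 0 ≤ f i x) →
        ∏ i, ∫ ω, f i (X i ω) ∂P ≤ ∫ ω, ∏ i, f i (X i ω) ∂P) := by
  constructor
  · intro hP f hfm hfmono hfbd hfnn
    choose C hC using hfbd
    have hCnn : ∀ i, 0 ≤ C i := fun i => le_trans (abs_nonneg _) (hC i 0)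
    have hfleD : ∀ i x, f i x ≤ ∑ j, C j := fun i x =>
      le_trans (le_trans (le_abs_self _) (hC i x))
        (Finset.single_le_sum (fun j _ => hCnn j) (Finset.mem_univ i))
    set K : ℕ := ⌈∑ j, C j⌉₊ with hK
    have hfleK : ∀ i x, f i x ≤ (K : ℝ) := fun i x => (hfleD i x).trans (Nat.le_ceil _)
    set h : ℕ → ℝ := fun n => 1 / ((n : ℝ) + 1) with hh
    have hhpos : ∀ n, 0 < h n := fun n => by positivity
    set Nn : ℕ → ℕ := fun n => K * (n + 1) with hNn
    have hNh : ∀ n, ((Nn n : ℝ)) * h n = (K : ℝ) := by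
      intro n
      have hne : ((n : ℝ) + 1) ≠ 0 := by positivity
      simp only [hNn, hh]
      push_cast
      field_simp
    set G : ℕ → Fin d → Ω → ℝ := fun n i ω =>
      ∑ k ∈ Finset.range (Nn n), h n * (if ((k : ℝ) + 1) * h n < f i (X i ω) then (1 : ℝ) else 0)
      with hG
    have hGbd : ∀ n i ω, f i (X i ω) - h n ≤ G n i ω ∧ G n i ω ≤ f i (X i ω) := by
      intro n i ω
      exact step_bounds' (f i (X i ω)) (h n) (hfnn i _) (hhpos n) (Nn n)
        (by rw [hNh n]; exact hfleK i _)
    have hGnn : ∀ n i ω, 0 ≤ G n i ω := by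
      intro n i ω
      refine Finset.sum_nonneg fun k _ => ?_
      have := (hhpos n).le
      split_ifs <;> nlinarith
    have hind_meas : ∀ (i : Fin d) (c : ℝ),
        Measurable fun ω => if c < f i (X i ω) then (1 : ℝ) else 0 := by
      intro i c
      exact Measurable.ite (((hfm i).comp (hX i)) measurableSet_Ioi)
        measurable_const measurable_const
    have hGmeas : ∀ n i, Measurable (fun ω => G n i ω) := by
      intro n i
      simp only [hG]
      exact Finset.measurable_sum _ fun k _ => ((hind_meas i _).const_mul _)
    have hind_int : ∀ (i : Fin d) (c r : ℝ),
        Integrable (fun ω => r * (if c < f i (X i ω) then (1 : ℝ) else 0)) P := by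
      intro i c r
      have hset : MeasurableSet {ω | c < f i (X i ω)} := ((hfm i).comp (hX i)) measurableSet_Ioi
      have he : (fun ω => r * (if c < f i (X i ω) then (1 : ℝ) else 0))
          = {ω | c < f i (X i ω)}.indicator (fun _ => r) := by
        ext ω
        by_cases hc : c < f i (X i ω) <;> simp [Set.indicator_apply, Set.mem_setOf_eq, hc]
      rw [he]
      exact (integrable_const r).indicator hset
    have hind_intval : ∀ (i : Fin d) (c : ℝ),
        ∫ ω, (if c < f i (X i ω) then (1 : ℝ) else 0) ∂P
          = (P {ω | c < f i (X i ω)}).toReal := by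
      intro i c
      have hset : MeasurableSet {ω | c < f i (X i ω)} := ((hfm i).comp (hX i)) measurableSet_Ioi
      have he : (fun ω => (if c < f i (X i ω) then (1 : ℝ) else 0))
          = {ω | c < f i (X i ω)}.indicator (fun _ => (1 : ℝ)) := by
        ext ω
        by_cases hc : c < f i (X i ω) <;> simp [Set.indicator_apply, Set.mem_setOf_eq, hc]
      rw [he, integral_indicator_const (1 : ℝ) hset, smul_eq_mul, mul_one, measureReal_def]
    have hEG : ∀ n i, ∫ ω, G n i ω ∂P
        = ∑ k ∈ Finset.range (Nn n),
            h n * (P {ω | ((k : ℝ) + 1) * h n < f i (X i ω)}).toReal := by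
      intro n i
      simp only [hG]
      rw [integral_finset_sum _ (fun k _ => hind_int i _ _)]
      refine Finset.sum_congr rfl fun k _ => ?_
      rw [integral_const_mul, hind_intval]
    have hkey : ∀ n, ∏ i, ∫ ω, G n i ω ∂P ≤ ∫ ω, ∏ i, G n i ω ∂P := by
      intro n
      have hprod : ∀ ω, ∏ i, G n i ω
          = ∑ g ∈ Fintype.piFinset (fun _ : Fin d => Finset.range (Nn n)),
              ∏ i, (h n * (if ((g i : ℝ) + 1) * h n < f i (X i ω) then (1 : ℝ) else 0)) := by
        intro ω
        simp only [hG]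
        exact Finset.prod_univ_sum _ _
      have hterm : ∀ (g : Fin d → ℕ) (ω : Ω),
          (∏ i, (h n * (if ((g i : ℝ) + 1) * h n < f i (X i ω) then (1 : ℝ) else 0)))
            = h n ^ d * (if ∀ i, ((g i : ℝ) + 1) * h n < f i (X i ω) then (1 : ℝ) else 0) := by
        intro g ω
        rw [Finset.prod_mul_distrib, Finset.prod_const, Finset.card_univ, Fintype.card_fin,
          Fintype.prod_boole]
        congr
      have hsetg : ∀ g : Fin d → ℕ,
          MeasurableSet {ω | ∀ i, ((g i : ℝ) + 1) * h n < f i (X i ω)} := by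
        intro g
        have he : {ω | ∀ i, ((g i : ℝ) + 1) * h n < f i (X i ω)}
            = ⋂ i, {ω | ((g i : ℝ) + 1) * h n < f i (X i ω)} := by ext ω; simp
        rw [he]
        exact MeasurableSet.iInter fun i => ((hfm i).comp (hX i)) measurableSet_Ioi
      have hindg : ∀ g : Fin d → ℕ,
          (fun ω => (if ∀ i, ((g i : ℝ) + 1) * h n < f i (X i ω) then (1 : ℝ) else 0))
            = {ω | ∀ i, ((g i : ℝ) + 1) * h n < f i (X i ω)}.indicator (fun _ => (1 : ℝ)) := by
        intro g
        ext ω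
        by_cases hc : ∀ i, ((g i : ℝ) + 1) * h n < f i (X i ω) <;>
          simp [Set.indicator_apply, Set.mem_setOf_eq, hc]
      have htermint : ∀ g : Fin d → ℕ, Integrable (fun ω =>
          h n ^ d * (if ∀ i, ((g i : ℝ) + 1) * h n < f i (X i ω) then (1 : ℝ) else 0)) P := by
        intro g
        have he : (fun ω =>
            h n ^ d * (if ∀ i, ((g i : ℝ) + 1) * h n < f i (X i ω) then (1 : ℝ) else 0))
            = {ω | ∀ i, ((g i : ℝ) + 1) * h n < f i (X i ω)}.indicator (fun _ => h n ^ d) := by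
          ext ω
          by_cases hc : ∀ i, ((g i : ℝ) + 1) * h n < f i (X i ω) <;>
            simp [Set.indicator_apply, Set.mem_setOf_eq, hc]
        rw [he]
        exact (integrable_const _).indicator (hsetg g)
      have hRHSval : ∫ ω, ∏ i, G n i ω ∂P
          = ∑ g ∈ Fintype.piFinset (fun _ : Fin d => Finset.range (Nn n)),
              h n ^ d * (P {ω | ∀ i, ((g i : ℝ) + 1) * h n < f i (X i ω)}).toReal := by
        calc ∫ ω, ∏ i, G n i ω ∂P
            = ∫ ω, ∑ g ∈ Fintype.piFinset (fun _ : Fin d => Finset.range (Nn n)),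
                h n ^ d * (if ∀ i, ((g i : ℝ) + 1) * h n < f i (X i ω) then (1 : ℝ) else 0) ∂P := by
              congr 1
              ext ω
              rw [hprod ω]
              exact Finset.sum_congr rfl fun g _ => hterm g ω
          _ = ∑ g ∈ Fintype.piFinset (fun _ : Fin d => Finset.range (Nn n)),
                ∫ ω, h n ^ d * (if ∀ i, ((g i : ℝ) + 1) * h n < f i (X i ω) then (1 : ℝ) else 0) ∂P :=
              integral_finset_sum _ (fun g _ => htermint g)
          _ = ∑ g ∈ Fintype.piFinset (fun _ : Fin d => Finset.range (Nn n)),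
                h n ^ d * (P {ω | ∀ i, ((g i : ℝ) + 1) * h n < f i (X i ω)}).toReal := by
              refine Finset.sum_congr rfl fun g _ => ?_
              rw [integral_const_mul, hindg g, integral_indicator_const (1 : ℝ) (hsetg g),
                smul_eq_mul, mul_one, measureReal_def]
      have hLHSval : ∏ i, ∫ ω, G n i ω ∂P
          = ∑ g ∈ Fintype.piFinset (fun _ : Fin d => Finset.range (Nn n)),
              ∏ i, (h n * (P {ω | ((g i : ℝ) + 1) * h n < f i (X i ω)}).toReal) := by
        simp only [hEG]
        exact Finset.prod_univ_sum _ _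
      rw [hLHSval, hRHSval]
      refine Finset.sum_le_sum fun g _ => ?_
      have hupper : ∀ i, IsUpperSet {x : ℝ | ((g i : ℝ) + 1) * h n < f i x} := by
        intro i x y hxy hx
        exact lt_of_lt_of_le hx (hfmono i hxy)
      have hpu := puod_upper' P X hX hP (fun i => {x | ((g i : ℝ) + 1) * h n < f i x}) hupper
      calc ∏ i, (h n * (P {ω | ((g i : ℝ) + 1) * h n < f i (X i ω)}).toReal)
          = h n ^ d * ∏ i, (P {ω | ((g i : ℝ) + 1) * h n < f i (X i ω)}).toReal := by
            rw [Finset.prod_mul_distrib, Finset.prod_const, Finset.card_univ, Fintype.card_fin]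
        _ = h n ^ d * (∏ i, P {ω | ((g i : ℝ) + 1) * h n < f i (X i ω)}).toReal := by
            rw [ENNReal.toReal_prod]
        _ ≤ h n ^ d * (P {ω | ∀ i, ((g i : ℝ) + 1) * h n < f i (X i ω)}).toReal := by
            refine mul_le_mul_of_nonneg_left ?_ (by positivity)
            exact ENNReal.toReal_mono (measure_ne_top P _) hpu
    have hptlim : ∀ (i : Fin d) (ω : Ω),
        Tendsto (fun n => G n i ω) atTop (𝓝 (f i (X i ω))) := by
      intro i ω
      have hh0 : Tendsto h atTop (𝓝 0) := tendsto_one_div_add_atTop_nhds_zero_nat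
      have h1 : Tendsto (fun n => f i (X i ω) - h n) atTop (𝓝 (f i (X i ω))) := by
        simpa using tendsto_const_nhds.sub hh0
      exact tendsto_of_tendsto_of_tendsto_of_le_of_le h1 tendsto_const_nhds
        (fun n => (hGbd n i ω).1) (fun n => (hGbd n i ω).2)
    have hlim1 : ∀ i, Tendsto (fun n => ∫ ω, G n i ω ∂P) atTop
        (𝓝 (∫ ω, f i (X i ω) ∂P)) := by
      intro i
      refine tendsto_integral_of_dominated_convergence (fun _ => (K : ℝ))
        (fun n => (hGmeas n i).aestronglyMeasurable) (integrable_const _) (fun n => ?_) ?_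
      · refine Eventually.of_forall fun ω => ?_
        rw [Real.norm_eq_abs, abs_of_nonneg (hGnn n i ω)]
        exact (hGbd n i ω).2.trans (hfleK i _)
      · exact Eventually.of_forall fun ω => hptlim i ω
    have hlimL : Tendsto (fun n => ∏ i, ∫ ω, G n i ω ∂P) atTop
        (𝓝 (∏ i, ∫ ω, f i (X i ω) ∂P)) :=
      tendsto_finset_prod _ fun i _ => hlim1 i
    have hlimR : Tendsto (fun n => ∫ ω, ∏ i, G n i ω ∂P) atTop
        (𝓝 (∫ ω, ∏ i, f i (X i ω) ∂P)) := by
      refine tendsto_integral_of_dominated_convergence (fun _ => (K : ℝ) ^ d)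
        (fun n => (Finset.measurable_prod Finset.univ
          (fun i _ => hGmeas n i)).aestronglyMeasurable)
        (integrable_const _) (fun n => ?_) ?_
      · refine Eventually.of_forall fun ω => ?_
        rw [Real.norm_eq_abs, abs_of_nonneg (Finset.prod_nonneg fun i _ => hGnn n i ω)]
        calc ∏ i, G n i ω ≤ ∏ _i : Fin d, (K : ℝ) :=
              Finset.prod_le_prod (fun i _ => hGnn n i ω)
                (fun i _ => (hGbd n i ω).2.trans (hfleK i _))
          _ = (K : ℝ) ^ d := by rw [Finset.prod_const, Finset.card_univ, Fintype.card_fin]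
      · exact Eventually.of_forall fun ω => tendsto_finset_prod _ fun i _ => hptlim i ω
    exact le_of_tendsto_of_tendsto' hlimL hlimR hkey
  · intro hE t
    set f : Fin d → ℝ → ℝ := fun i x => if t i < x then 1 else 0 with hf
    have h1 : ∀ i, Measurable (f i) := fun i =>
      Measurable.ite measurableSet_Ioi measurable_const measurable_const
    have h2 : ∀ i, Monotone (f i) := by
      intro i a b hab
      simp only [hf]
      split_ifs with ha hb
      · exact le_rfl
      · exact absurd (ha.trans_le hab) hb
      · norm_num
      · exact le_rfl
    have h3 : ∀ i, ∃ C, ∀ x, |f i x| ≤ C := fun i =>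
      ⟨1, fun x => by simp only [hf]; split_ifs <;> norm_num⟩
    have h4 : ∀ i x, 0 ≤ f i x := fun i x => by simp only [hf]; split_ifs <;> norm_num
    have hmain := hE f h1 h2 h3 h4
    have hL : ∀ i, ∫ ω, f i (X i ω) ∂P = (P {ω | t i < X i ω}).toReal := by
      intro i
      have hset : MeasurableSet {ω | t i < X i ω} := (hX i) measurableSet_Ioi
      have he : (fun ω => f i (X i ω)) = {ω | t i < X i ω}.indicator (fun _ => (1 : ℝ)) := by
        ext ω
        by_cases hc : t i < X i ω <;> simp [hf, Set.indicator_apply, Set.mem_setOf_eq, hc]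
      rw [he, integral_indicator_const (1 : ℝ) hset, smul_eq_mul, mul_one, measureReal_def]
    have hR : ∫ ω, ∏ i, f i (X i ω) ∂P = (P {ω | ∀ i, t i < X i ω}).toReal := by
      have hset : MeasurableSet {ω | ∀ i, t i < X i ω} := by
        have he : {ω | ∀ i, t i < X i ω} = ⋂ i, {ω | t i < X i ω} := by ext ω; simp
        rw [he]; exact MeasurableSet.iInter fun i => (hX i) measurableSet_Ioi
      have he : (fun ω => ∏ i, f i (X i ω))
          = {ω | ∀ i, t i < X i ω}.indicator (fun _ => (1 : ℝ)) := by
        ext ω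
        simp only [hf, Fintype.prod_boole]
        by_cases hc : ∀ i, t i < X i ω <;> simp [Set.indicator_apply, Set.mem_setOf_eq, hc]
      rw [he, integral_indicator_const (1 : ℝ) hset, smul_eq_mul, mul_one, measureReal_def]
    rw [hR] at hmain
    simp only [hL] at hmain
    rw [← ENNReal.toReal_prod] at hmain
    exact (ENNReal.toReal_le_toReal (ENNReal.prod_ne_top fun i _ => measure_ne_top P _)
      (measure_ne_top P _)).1 hmain
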